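/- Let σ be a permutation of Fin n and A ∈ Matrix (Fin n) (Fin n) ℂ a Hermitian matrix that is not diagonal (there exist i ≠ j with A_{ij} ≠ 0). Then the partial transpose ρ[A,σ]^{T₂} is not positive semidefinite. -/

import Mathlib

open ComplexOrder

/-- The CDP matrix of `A` and a permutation `σ`. -/
def cdpMatrix {n : ℕ} (A : Matrix (Fin n) (Fin n) ℂ) (σ : Equiv.Perm (Fin n)) :
    Matrix (Fin n × Fin n) (Fin n × Fin n) ℂ :=
  Matrix.of fun x y => if x.2 = σ x.1 ∧ y.2 = σ y.1 then A x.1 y.1 else 0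

/-- The partial transpose (on the second factor) of a matrix indexed by `Fin n × Fin n`:
`(X^{T₂})_{(i,p),(j,q)} = X_{(i,q),(j,p)}`. -/
def ptranspose {n : ℕ} (X : Matrix (Fin n × Fin n) (Fin n × Fin n) ℂ) :
    Matrix (Fin n × Fin n) (Fin n × Fin n) ℂ :=
  Matrix.of fun x y => X (x.1, y.2) (y.1, x.2)

/-- If `A` is Hermitian but not diagonal, then `ρ[A,σ]^{T₂}` is not positive
semidefinite. -/
theorem ptranspose_cdpMatrix_not_posSemidef {n : ℕ} (σ : Equiv.Perm (Fin n))
    (A : Matrix (Fin n) (Fin n) ℂ) (hA : A.IsHermitian)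
    (i j : Fin n) (hij : i ≠ j) (hAij : A i j ≠ 0) :
    ¬ (ptranspose (cdpMatrix A σ)).PosSemidef := by
  intro h
  set M := ptranspose (cdpMatrix A σ) with hM
  set b : ℂ := -(starRingEnd ℂ (A i j)) with hb
  set p : Fin n × Fin n := (i, σ j) with hp
  set q : Fin n × Fin n := (j, σ i) with hq
  have hpq : p ≠ q := by simp [hp, hq, hij]
  set v : (Fin n × Fin n) → ℂ := Pi.single p 1 + Pi.single q b with hv
  have h2 := h.dotProduct_mulVec_nonneg v
  have hMpp : M p p = 0 := by
    simp only [hM, ptranspose, cdpMatrix, Matrix.of_apply, hp]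
    simp [hij, fun h' : σ j = σ i => hij (σ.injective h'.symm)]
    exact fun h' => absurd h' hij.symm
  have hMqq : M q q = 0 := by
    simp only [hM, ptranspose, cdpMatrix, Matrix.of_apply, hq]
    simp [fun h' : σ i = σ j => hij (σ.injective h')]
    exact fun h' => absurd h' hij
  have hMpq : M p q = A i j := by
    simp [hM, ptranspose, cdpMatrix, hp, hq]
  have hMqp : M q p = A j i := by
    simp [hM, ptranspose, cdpMatrix, hp, hq]
  have hji : A j i = starRingEnd ℂ (A i j) := by
    have := congrFun (congrFun hA.eq j) i
    simpa [Matrix.conjTranspose_apply] using this.symm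
  set r : ℝ := Complex.normSq (A i j) with hr
  have key : dotProduct (star v) (M.mulVec v) = -((2 * r : ℝ) : ℂ) := by
    have expand : dotProduct (star v) (M.mulVec v)
        = 1 * (M p p * 1 + M p q * b) + starRingEnd ℂ b * (M q p * 1 + M q q * b) := by
      simp [hv, Matrix.mulVec_add, Matrix.mulVec_single, dotProduct_add,
        add_dotProduct, single_dotProduct, star_add, ← Pi.single_star,
        dotProduct_single, hpq, hpq.symm, Pi.single_apply, mul_add]
      ring
    rw [expand, hMpp, hMqq, hMpq, hMqp, hji, hb, hr]
    push_cast
    simp only [map_neg, Complex.conj_conj]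
    rw [Complex.normSq_eq_conj_mul_self]
    ring
  rw [key] at h2
  have hrpos : 0 < r := by simpa [hr, Complex.normSq_pos] using hAij
  have h3 : (0:ℝ) ≤ -(2 * r) := by exact_mod_cast h2
  linarith
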